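/- For real y, z with 0 ≤ y < 1 and 0 ≤ z < 1 (the 2D triangle VPV identity, case a=1, b=0): ∑_{(j,k): 1 ≤ j ≤ k, gcd(j,k)=1} (1/j) · log(1 - y^j z^k) = (1/(1-z)) · log(1 - yz). Equivalently, ∏_{1≤j≤k, gcd(j,k)=1} (1 - y^j z^k)^{1/j} = (1 - yz)^{1/(1-z)}. -/

import Mathlib

open Real

lemma logSeriesPNat {x : ℝ} (h0 : 0 ≤ x) (h1 : x < 1) :
    HasSum (fun m : ℕ+ => x ^ (m : ℕ) / (m : ℝ)) (-Real.log (1 - x)) := by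
  have h := hasSum_pow_div_log_of_abs_lt_one (x := x) (by rw [abs_of_nonneg h0]; exact h1)
  rw [← Equiv.pnatEquivNat.symm.hasSum_iff]
  refine h.congr_fun fun n => ?_
  simp [Equiv.pnatEquivNat, Function.comp, Nat.succPNat]

def eU : ℕ+ × ℕ ≃ {p : ℕ+ × ℕ+ // p.1 ≤ p.2} where
  toFun x := ⟨(x.1, ⟨(x.1 : ℕ) + x.2, by positivity⟩), by
    rw [← PNat.coe_le_coe _ _]; exact Nat.le_add_right _ _⟩
  invFun p := (p.1.1, (p.1.2 : ℕ) - (p.1.1 : ℕ))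
  left_inv x := by
    ext <;> simp
  right_inv p := by
    have h : (p.1.1 : ℕ) ≤ (p.1.2 : ℕ) := (PNat.coe_le_coe _ _).mpr p.2
    ext <;> simp
    exact PNat.coe_injective (by simp; omega)

def eT : {p : ℕ+ × ℕ+ // p.1 ≤ p.2 ∧ Nat.gcd (p.1 : ℕ) (p.2 : ℕ) = 1} × ℕ+ ≃
    {p : ℕ+ × ℕ+ // p.1 ≤ p.2} where
  toFun x := ⟨(x.1.1.1 * x.2, x.1.1.2 * x.2), by
    rw [← PNat.coe_le_coe _ _]
    simp only [PNat.mul_coe]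
    exact Nat.mul_le_mul_right _ ((PNat.coe_le_coe _ _).mpr x.1.2.1)⟩
  invFun p :=
    let g : ℕ := Nat.gcd (p.1.1 : ℕ) (p.1.2 : ℕ)
    have hg : 0 < g := Nat.gcd_pos_of_pos_left _ p.1.1.2
    (⟨(⟨(p.1.1 : ℕ) / g, Nat.div_pos (Nat.le_of_dvd p.1.1.2 (Nat.gcd_dvd_left _ _)) hg⟩,
       ⟨(p.1.2 : ℕ) / g, Nat.div_pos (Nat.le_of_dvd p.1.2.2 (Nat.gcd_dvd_right _ _)) hg⟩),
      by rw [← PNat.coe_le_coe _ _]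
         exact Nat.div_le_div_right ((PNat.coe_le_coe _ _).mpr p.2),
      Nat.coprime_div_gcd_div_gcd hg⟩, ⟨g, hg⟩)
  left_inv x := by
    obtain ⟨⟨⟨j, k⟩, hjk, hco⟩, m⟩ := x
    have hg : Nat.gcd ((j : ℕ) * m) ((k : ℕ) * m) = m := by
      rw [Nat.gcd_mul_right, hco, one_mul]
    refine Prod.ext (Subtype.ext (Prod.ext ?_ ?_)) ?_
    · apply PNat.coe_injective; simp [hg, Nat.mul_div_cancel _ m.2]
    · apply PNat.coe_injective; simp [hg, Nat.mul_div_cancel _ m.2]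
    · exact Subtype.ext (by simp [hg]; rfl)
  right_inv p := by
    obtain ⟨⟨J, K⟩, h⟩ := p
    have hgJ : Nat.gcd (J : ℕ) (K : ℕ) ∣ (J : ℕ) := Nat.gcd_dvd_left _ _
    have hgK : Nat.gcd (J : ℕ) (K : ℕ) ∣ (K : ℕ) := Nat.gcd_dvd_right _ _
    refine Subtype.ext (Prod.ext ?_ ?_)
    · apply PNat.coe_injective; simp only [PNat.mul_coe, PNat.mk_coe]; exact Nat.div_mul_cancel hgJ
    · apply PNat.coe_injective; simp only [PNat.mul_coe, PNat.mk_coe]; exact Nat.div_mul_cancel hgK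

theorem stmt_10 (y z : ℝ) (hy0 : 0 ≤ y) (hy1 : y < 1) (hz0 : 0 ≤ z) (hz1 : z < 1) :
    (∑' p : {p : ℕ+ × ℕ+ // p.1 ≤ p.2 ∧ Nat.gcd (p.1 : ℕ) (p.2 : ℕ) = 1},
        (1 / (p.val.1 : ℝ)) *
          Real.log (1 - y ^ (p.val.1 : ℕ) * z ^ (p.val.2 : ℕ)) =
      1 / (1 - z) * Real.log (1 - y * z)) ∧
    (∏' p : {p : ℕ+ × ℕ+ // p.1 ≤ p.2 ∧ Nat.gcd (p.1 : ℕ) (p.2 : ℕ) = 1},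
        (1 - y ^ (p.val.1 : ℕ) * z ^ (p.val.2 : ℕ)) ^ ((1 : ℝ) / (p.val.1 : ℝ)) =
      (1 - y * z) ^ (1 / (1 - z))) := by
  have hyz1 : y * z < 1 := lt_of_le_of_lt (by nlinarith) hz1
  have hyz0 : 0 ≤ y * z := mul_nonneg hy0 hz0
  have hA : HasSum (fun J : ℕ+ => (y*z)^(J:ℕ)/((J:ℕ):ℝ)) (-Real.log (1 - y*z)) :=
    logSeriesPNat hyz0 hyz1
  have hB : HasSum (fun n : ℕ => z^n) (1-z)⁻¹ := hasSum_geometric_of_lt_one hz0 hz1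
  have hSprod : Summable (fun x : ℕ+ × ℕ => ((y*z)^(x.1:ℕ)/((x.1:ℕ):ℝ)) * z^x.2) :=
    hA.summable.mul_of_nonneg hB.summable (fun J => by positivity) (fun n => by positivity)
  have hProd := hA.mul hB hSprod
  have hU : HasSum (fun p : {p : ℕ+ × ℕ+ // p.1 ≤ p.2} =>
      y^((p.1.1:ℕ)) * z^((p.1.2:ℕ)) / ((p.1.1:ℕ):ℝ)) (-Real.log (1-y*z) * (1-z)⁻¹) := by
    rw [← eU.hasSum_iff]
    refine hProd.congr_fun fun x => ?_
    show y^((x.1:ℕ)) * z^((x.1:ℕ) + x.2) / ((x.1:ℕ):ℝ) = ((y*z)^(x.1:ℕ)/((x.1:ℕ):ℝ)) * z^x.2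
    rw [mul_pow, pow_add]; ring
  have hlt : ∀ t : {p : ℕ+ × ℕ+ // p.1 ≤ p.2 ∧ Nat.gcd (p.1 : ℕ) (p.2 : ℕ) = 1},
      y ^ (t.1.1:ℕ) * z ^ (t.1.2:ℕ) < 1 := by
    intro t
    have h1 : y ^ (t.1.1:ℕ) ≤ 1 := pow_le_one₀ hy0 hy1.le
    have h2 : z ^ (t.1.2:ℕ) < 1 := pow_lt_one₀ hz0 hz1 t.1.2.2.ne'
    nlinarith [pow_nonneg hy0 (t.1.1:ℕ), pow_nonneg hz0 (t.1.2:ℕ)]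
  have hfib : ∀ t : {p : ℕ+ × ℕ+ // p.1 ≤ p.2 ∧ Nat.gcd (p.1 : ℕ) (p.2 : ℕ) = 1},
      HasSum (fun m : ℕ+ => y^(((t.1.1*m : ℕ+):ℕ)) * z^(((t.1.2*m : ℕ+):ℕ)) / (((t.1.1*m : ℕ+):ℕ):ℝ))
        ((1/((t.1.1:ℕ):ℝ)) * (-Real.log (1 - y^(t.1.1:ℕ) * z^(t.1.2:ℕ)))) := by
    intro t
    have hx0 : 0 ≤ y^(t.1.1:ℕ) * z^(t.1.2:ℕ) := by positivity
    have h := (logSeriesPNat hx0 (hlt t)).mul_left (1/((t.1.1:ℕ):ℝ))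
    refine h.congr_fun fun m => ?_
    have hj : ((t.1.1:ℕ):ℝ) ≠ 0 := by positivity
    simp only [PNat.mul_coe]
    rw [mul_pow, ← pow_mul, ← pow_mul]
    push_cast
    field_simp
  have hUT : HasSum ((fun p : {p : ℕ+ × ℕ+ // p.1 ≤ p.2} =>
      y^((p.1.1:ℕ)) * z^((p.1.2:ℕ)) / ((p.1.1:ℕ):ℝ)) ∘ eT) (-Real.log (1-y*z) * (1-z)⁻¹) :=
    (eT.hasSum_iff).mpr hU
  have hT : HasSum (fun t : {p : ℕ+ × ℕ+ // p.1 ≤ p.2 ∧ Nat.gcd (p.1 : ℕ) (p.2 : ℕ) = 1} =>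
      (1/((t.1.1:ℕ):ℝ)) * (-Real.log (1 - y^(t.1.1:ℕ) * z^(t.1.2:ℕ))))
      (-Real.log (1-y*z) * (1-z)⁻¹) :=
    HasSum.prod_fiberwise hUT hfib
  have hfinal : HasSum (fun t : {p : ℕ+ × ℕ+ // p.1 ≤ p.2 ∧ Nat.gcd (p.1 : ℕ) (p.2 : ℕ) = 1} =>
      (1/((t.1.1:ℕ):ℝ)) * Real.log (1 - y^(t.1.1:ℕ) * z^(t.1.2:ℕ)))
      (1/(1-z) * Real.log (1-y*z)) := by
    have h2 := hT.neg
    have h3 : -(-Real.log (1-y*z) * (1-z)⁻¹) = 1/(1-z) * Real.log (1-y*z) := by ring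
    rw [h3] at h2
    exact h2.congr_fun fun t => by ring
  constructor
  · exact hfinal.tsum_eq
  · have hpos : ∀ t : {p : ℕ+ × ℕ+ // p.1 ≤ p.2 ∧ Nat.gcd (p.1 : ℕ) (p.2 : ℕ) = 1},
        (0:ℝ) < 1 - y^(t.1.1:ℕ) * z^(t.1.2:ℕ) := fun t => by linarith [hlt t]
    have hprod := hfinal.rexp
    have heq : (Real.exp ∘ fun t : {p : ℕ+ × ℕ+ // p.1 ≤ p.2 ∧ Nat.gcd (p.1 : ℕ) (p.2 : ℕ) = 1} =>
        (1/((t.1.1:ℕ):ℝ)) * Real.log (1 - y^(t.1.1:ℕ) * z^(t.1.2:ℕ))) =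
        fun t => (1 - y^(t.1.1:ℕ) * z^(t.1.2:ℕ)) ^ ((1:ℝ)/((t.1.1:ℕ):ℝ)) := by
      funext t
      rw [Function.comp_apply, Real.rpow_def_of_pos (hpos t), mul_comm]
    rw [heq] at hprod
    rw [hprod.tprod_eq, Real.rpow_def_of_pos (by linarith : (0:ℝ) < 1 - y*z), mul_comm]
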